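/- Let $X \subset Y$ be Banach spaces, $1 < p \leq \infty$, $X$ reflexive, and $I$ an interval. If $(f_n)$ is a bounded sequence in $L^p(I, X)$, $f: I \to Y$ satisfies $f_n(t) \rightharpoonup f(t)$ weakly in $Y$ for almost every $t \in I$, and $(f_n)$ is bounded in $L^q(I,Y)$ for some $1 < q \leq \infty$, then $f \in L^p(I, X)$ and $\|f\|_{L^p(I,X)} \leq \liminf_{n \to \infty} \|f_n\|_{L^p(I,X)}$. -/

import Mathlib

open MeasureTheory Filter
open scoped Topology ENNReal

section Aux
lemma exists_weak_cluster {X Y : Type*} [NormedAddCommGroup X] [NormedSpace ℝ X]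
    [NormedAddCommGroup Y] [NormedSpace ℝ Y]
    (hrefl : Function.Surjective (NormedSpace.inclusionInDoubleDual ℝ X))
    (ι : X →L[ℝ] Y) {K : Set X} (hKc : IsClosed K) (hKconv : Convex ℝ K)
    (x : ℕ → X) (hxK : ∀ k, x k ∈ K) {M : ℝ} (hM : ∀ k, ‖x k‖ ≤ M)
    {y : Y} (hy : ∀ φ : Y →L[ℝ] ℝ, Tendsto (fun k => φ (ι (x k))) atTop (𝓝 (φ y))) :
    ∃ z : X, z ∈ K ∧ ι z = y ∧ ‖z‖ ≤ M := by
  have hM0 : 0 ≤ M := (norm_nonneg (x 0)).trans (hM 0)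
  set U : Ultrafilter ℕ := Ultrafilter.of atTop with hUdef
  have hU : (U : Filter ℕ) ≤ atTop := Ultrafilter.of_le _
  have habs : ∀ (φ : StrongDual ℝ X) (k : ℕ), |φ (x k)| ≤ ‖φ‖ * M := by
    intro φ k
    calc |φ (x k)| = ‖φ (x k)‖ := (Real.norm_eq_abs _).symm
    _ ≤ ‖φ‖ * ‖x k‖ := φ.le_opNorm _
    _ ≤ ‖φ‖ * M := mul_le_mul_of_nonneg_left (hM k) (norm_nonneg φ)
  have hlim : ∀ φ : StrongDual ℝ X, ∃ a : ℝ,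
      Tendsto (fun k => φ (x k)) (U : Filter ℕ) (𝓝 a) := by
    intro φ
    have hbd : ∀ k, φ (x k) ∈ Set.Icc (-(‖φ‖ * M)) (‖φ‖ * M) := by
      intro k
      rcases abs_le.1 (habs φ k) with ⟨h1, h2⟩
      exact ⟨h1, h2⟩
    have hle : (Ultrafilter.map (fun k => φ (x k)) U : Filter ℝ) ≤
        𝓟 (Set.Icc (-(‖φ‖ * M)) (‖φ‖ * M)) := by
      rw [le_principal_iff]
      exact Filter.mem_map.2 (Filter.Eventually.of_forall hbd)
    obtain ⟨a, _, ha⟩ := (isCompact_Icc (a := -(‖φ‖ * M)) (b := ‖φ‖ * M)).ultrafilter_le_nhds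
      (Ultrafilter.map (fun k => φ (x k)) U) hle
    exact ⟨a, ha⟩
  choose lim hlimspec using hlim
  have hbound : ∀ φ : StrongDual ℝ X, ‖lim φ‖ ≤ M * ‖φ‖ := by
    intro φ
    have h1 : Tendsto (fun k => |φ (x k)|) (U : Filter ℕ) (𝓝 |lim φ|) := (hlimspec φ).abs
    have h2 : |lim φ| ≤ ‖φ‖ * M :=
      le_of_tendsto h1 (Filter.Eventually.of_forall fun k => habs φ k)
    rw [Real.norm_eq_abs, mul_comm]
    exact h2
  have hadd : ∀ φ χ : StrongDual ℝ X, lim (φ + χ) = lim φ + lim χ := by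
    intro φ χ
    refine tendsto_nhds_unique (hlimspec (φ + χ)) ?_
    simpa using (hlimspec φ).add (hlimspec χ)
  have hsmul : ∀ (c : ℝ) (φ : StrongDual ℝ X), lim (c • φ) = c * lim φ := by
    intro c φ
    refine tendsto_nhds_unique (hlimspec (c • φ)) ?_
    simpa using (hlimspec φ).const_mul c
  let ψ : StrongDual ℝ X →ₗ[ℝ] ℝ :=
    { toFun := lim
      map_add' := hadd
      map_smul' := fun c φ => by simpa using hsmul c φ }
  let ψc : StrongDual ℝ (StrongDual ℝ X) :=
    LinearMap.mkContinuous ψ M fun φ => hbound φ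
  obtain ⟨z, hz⟩ := hrefl ψc
  have hev : ∀ φ : StrongDual ℝ X, φ z = lim φ := by
    intro φ
    have := congrArg (fun T : StrongDual ℝ (StrongDual ℝ X) => T φ) hz
    simpa [NormedSpace.dual_def, ψc, ψ, LinearMap.mkContinuous] using this
  have hzlim : ∀ φ : StrongDual ℝ X,
      Tendsto (fun k => φ (x k)) (U : Filter ℕ) (𝓝 (φ z)) := by
    intro φ; rw [hev φ]; exact hlimspec φ
  refine ⟨z, ?_, ?_, ?_⟩
  · by_contra hzK
    obtain ⟨φ, u, hu1, hu2⟩ := geometric_hahn_banach_closed_point hKconv hKc hzK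
    have : φ z ≤ u :=
      le_of_tendsto (hzlim φ) (Filter.Eventually.of_forall fun k => (hu1 _ (hxK k)).le)
    exact absurd hu2 (not_lt.2 this)
  · rw [NormedSpace.eq_iff_forall_dual_eq ℝ]
    intro χ
    have h1 : Tendsto (fun k => χ (ι (x k))) (U : Filter ℕ) (𝓝 (χ (ι z))) := by
      simpa using hzlim (χ.comp ι)
    have h2 : Tendsto (fun k => χ (ι (x k))) (U : Filter ℕ) (𝓝 (χ y)) :=
      (hy χ).mono_left hU
    exact tendsto_nhds_unique h1 h2
  · refine NormedSpace.norm_le_dual_bound ℝ z hM0 fun φ => ?_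
    rw [hev φ]
    exact hbound φ

lemma exists_separating_family {Y : Type*} [NormedAddCommGroup Y] [NormedSpace ℝ Y]
    {W : Set Y} (hW : TopologicalSpace.IsSeparable W) :
    ∃ φ : ℕ → (Y →L[ℝ] ℝ), ∀ y ∈ W, ∀ y' ∈ W, (∀ k, φ k y = φ k y') → y = y' := by
  have hV : TopologicalSpace.IsSeparable ((fun p : Y × Y => p.1 - p.2) '' (W ×ˢ W)) :=
    (hW.prod hW).image (continuous_fst.sub continuous_snd)
  obtain ⟨c, hc_count, hc_sub⟩ := hV
  have hcount : (c ∪ {0} : Set Y).Countable := hc_count.union (Set.countable_singleton 0)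
  obtain ⟨d, hd⟩ := hcount.exists_eq_range ⟨0, Or.inr rfl⟩
  have hsub : (fun p : Y × Y => p.1 - p.2) '' (W ×ˢ W) ⊆ closure (Set.range d) := by
    refine hc_sub.trans (closure_mono ?_)
    rw [← hd]; exact Set.subset_union_left
  classical
  refine ⟨fun k => if h : d k = 0 then 0 else (exists_dual_vector ℝ (d k) (norm_ne_zero_iff.2 h)).choose,
    fun y hy y' hy' heq => ?_⟩
  by_contra hne
  have hz : y - y' ∈ closure (Set.range d) :=
    hsub ⟨(y, y'), ⟨hy, hy'⟩, rfl⟩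
  have hz0 : y - y' ≠ 0 := sub_ne_zero.2 hne
  have hzpos : 0 < ‖y - y'‖ := norm_pos_iff.2 hz0
  obtain ⟨w, ⟨k, rfl⟩, hwz⟩ := Metric.mem_closure_iff.1 hz (‖y - y'‖ / 3) (by linarith)
  rw [dist_eq_norm] at hwz
  have hdk0 : d k ≠ 0 := by
    intro h0
    rw [h0, sub_zero] at hwz
    linarith
  obtain ⟨hn1, hn2⟩ := (exists_dual_vector ℝ (d k) (norm_ne_zero_iff.2 hdk0)).choose_spec
  set φk := (exists_dual_vector ℝ (d k) (norm_ne_zero_iff.2 hdk0)).choose with hφk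
  have hdknorm : ‖y - y'‖ - ‖y - y'‖ / 3 ≤ ‖d k‖ := by
    have := norm_sub_norm_le (y - y') (d k)
    linarith [hwz.le]
  have hval : φk (y - y') = φk (d k) + φk ((y - y') - d k) := by
    rw [← map_add]; congr 1; abel
  have hsm : |φk ((y - y') - d k)| ≤ ‖y - y'‖ / 3 := by
    calc |φk ((y - y') - d k)| = ‖φk ((y - y') - d k)‖ := (Real.norm_eq_abs _).symm
    _ ≤ ‖φk‖ * ‖(y - y') - d k‖ := φk.le_opNorm _
    _ ≤ 1 * (‖y - y'‖ / 3) := by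
        exact mul_le_mul (le_of_eq hn1) hwz.le (norm_nonneg _) zero_le_one
    _ = ‖y - y'‖ / 3 := one_mul _
  have hφkdk : (‖d k‖ : ℝ) = φk (d k) := hn2.symm
  have hpos : 0 < φk (y - y') := by
    have h1 : -(‖y - y'‖ / 3) ≤ φk ((y - y') - d k) := (abs_le.1 hsm).1
    rw [hval, ← hφkdk]
    linarith
  have hzero : φk (y - y') = 0 := by
    have := heq k
    simp only [hφk] at *
    rw [map_sub]
    rw [dif_neg hdk0] at this
    rw [this]; ring
  linarith

lemma eLpNorm_le_liminf_of_ae_liminf {α X : Type*} [MeasurableSpace α] {μ : Measure α}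
    [NormedAddCommGroup X] {p : ℝ≥0∞} (hp0 : p ≠ 0)
    {h : ℕ → α → X} (hh : ∀ n, AEStronglyMeasurable (h n) μ) {g : α → X}
    (hg : ∀ᵐ t ∂μ, (‖g t‖₊ : ℝ≥0∞) ≤ liminf (fun n => (‖h n t‖₊ : ℝ≥0∞)) atTop) :
    eLpNorm g p μ ≤ liminf (fun n => eLpNorm (h n) p μ) atTop := by
  by_cases hptop : p = ∞
  · subst hptop
    simp only [eLpNorm_exponent_top]
    have hae : ∀ᵐ t ∂μ, ∀ n, (‖h n t‖₊ : ℝ≥0∞) ≤ eLpNormEssSup (h n) μ :=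
      ae_all_iff.2 fun n => ae_le_eLpNormEssSup
    have hle : ∀ᵐ t ∂μ, (‖g t‖₊ : ℝ≥0∞) ≤ liminf (fun n => eLpNormEssSup (h n) μ) atTop := by
      filter_upwards [hg, hae] with t h1 h2
      exact h1.trans (liminf_le_liminf (Filter.Eventually.of_forall h2))
    exact essSup_le_of_ae_le _ hle
  · have hr : 0 < p.toReal := ENNReal.toReal_pos hp0 hptop
    have hmono : Monotone (fun x : ℝ≥0∞ => x ^ p.toReal) :=
      fun a b hab => ENNReal.rpow_le_rpow hab hr.le
    have hmono' : Monotone (fun x : ℝ≥0∞ => x ^ (1 / p.toReal)) :=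
      fun a b hab => ENNReal.rpow_le_rpow hab (by positivity)
    rw [eLpNorm_eq_lintegral_rpow_enorm_toReal hp0 hptop]
    have step1 : ∫⁻ t, (‖g t‖₊ : ℝ≥0∞) ^ p.toReal ∂μ ≤
        ∫⁻ t, liminf (fun n => (‖h n t‖₊ : ℝ≥0∞) ^ p.toReal) atTop ∂μ := by
      refine lintegral_mono_ae (hg.mono fun t ht => ?_)
      have := hmono.map_liminf_of_continuousAt (F := atTop) (fun n => (‖h n t‖₊ : ℝ≥0∞))
        (ENNReal.continuous_rpow_const.continuousAt)
      calc (‖g t‖₊ : ℝ≥0∞) ^ p.toReal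
          ≤ (liminf (fun n => (‖h n t‖₊ : ℝ≥0∞)) atTop) ^ p.toReal := hmono ht
        _ = liminf (fun n => (‖h n t‖₊ : ℝ≥0∞) ^ p.toReal) atTop := this
    have step2 : ∫⁻ t, liminf (fun n => (‖h n t‖₊ : ℝ≥0∞) ^ p.toReal) atTop ∂μ ≤
        liminf (fun n => ∫⁻ t, (‖h n t‖₊ : ℝ≥0∞) ^ p.toReal ∂μ) atTop := by
      refine lintegral_liminf_le' fun n => ?_
      exact (ENNReal.continuous_rpow_const.measurable).comp_aemeasurable (hh n).enorm
    calc (∫⁻ t, (‖g t‖₊ : ℝ≥0∞) ^ p.toReal ∂μ) ^ (1 / p.toReal)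
        ≤ (liminf (fun n => ∫⁻ t, (‖h n t‖₊ : ℝ≥0∞) ^ p.toReal ∂μ) atTop) ^ (1 / p.toReal) :=
          hmono' (step1.trans step2)
      _ = liminf (fun n => (∫⁻ t, (‖h n t‖₊ : ℝ≥0∞) ^ p.toReal ∂μ) ^ (1 / p.toReal)) atTop :=
          hmono'.map_liminf_of_continuousAt (F := atTop) _ (ENNReal.continuous_rpow_const.continuousAt)
      _ = liminf (fun n => eLpNorm (h n) p μ) atTop := by
          congr 1; funext n; rw [eLpNorm_eq_lintegral_rpow_enorm_toReal hp0 hptop]; rfl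
end Aux

/-- Weak lower semicontinuity in Bochner spaces: let `ι : X ↪ Y` be a continuous linear
embedding of Banach spaces with `X` reflexive, `1 < p ≤ ∞`, `I` an interval. If `(fₙ)`
is bounded in `L^p(I,X)` and in `L^q(I,Y)` for some `1 < q ≤ ∞`, and `fₙ(t) ⇀ f(t)`
weakly in `Y` for a.e. `t ∈ I`, then `f ∈ L^p(I,X)` (i.e. `f = ι ∘ g` a.e. for some
`g ∈ L^p(I,X)`) with `‖g‖_{L^p(I,X)} ≤ liminf ‖fₙ‖_{L^p(I,X)}`. -/
theorem stmt_14 {X Y : Type*} [NormedAddCommGroup X] [NormedSpace ℝ X] [CompleteSpace X]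
    [NormedAddCommGroup Y] [NormedSpace ℝ Y] [CompleteSpace Y]
    (hrefl : Function.Surjective (NormedSpace.inclusionInDoubleDual ℝ X))
    (ι : X →L[ℝ] Y) (hι : Function.Injective ι)
    (I : Set ℝ) (hI : MeasurableSet I)
    (p q : ℝ≥0∞) (hp : 1 < p) (hq : 1 < q)
    (fn : ℕ → ℝ → X) (f : ℝ → Y)
    (hmeas : ∀ n, AEStronglyMeasurable (fn n) (volume.restrict I))
    (hbddX : ∃ C : ℝ≥0∞, C < ⊤ ∧ ∀ n, eLpNorm (fn n) p (volume.restrict I) ≤ C)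
    (hbddY : ∃ C : ℝ≥0∞, C < ⊤ ∧ ∀ n,
      eLpNorm (fun t => ι (fn n t)) q (volume.restrict I) ≤ C)
    (hweak : ∀ᵐ t ∂(volume.restrict I), ∀ φ : Y →L[ℝ] ℝ,
      Tendsto (fun n => φ (ι (fn n t))) atTop (𝓝 (φ (f t)))) :
    ∃ g : ℝ → X,
      (∀ᵐ t ∂(volume.restrict I), ι (g t) = f t) ∧
        MemLp g p (volume.restrict I) ∧
        eLpNorm g p (volume.restrict I) ≤
          liminf (fun n => eLpNorm (fn n) p (volume.restrict I)) atTop := by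
  classical
  set μ := volume.restrict I with hμdef
  have hp0 : p ≠ 0 := (zero_lt_one.trans hp).ne'
  set h : ℕ → ℝ → X := fun n => (hmeas n).mk (fn n) with hhdef
  have hhsm : ∀ n, StronglyMeasurable (h n) := fun n => (hmeas n).stronglyMeasurable_mk
  have hfn_eq : ∀ n, fn n =ᵐ[μ] h n := fun n => (hmeas n).ae_eq_mk
  obtain ⟨C, hC, hCb⟩ := hbddX
  have hCbh : ∀ n, eLpNorm (h n) p μ ≤ C := fun n => by
    rw [← eLpNorm_congr_ae (hfn_eq n)]; exact hCb n
  set Λ : ℝ → ℝ≥0∞ := fun t => liminf (fun n => (‖h n t‖₊ : ℝ≥0∞)) atTop with hΛdef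
  -- a.e. finiteness of Λ
  have hΛfin : ∀ᵐ t ∂μ, Λ t < ∞ := by
    by_cases hptop : p = ∞
    · have hae : ∀ᵐ t ∂μ, ∀ n, (‖h n t‖₊ : ℝ≥0∞) ≤ eLpNormEssSup (h n) μ :=
        ae_all_iff.2 fun n => ae_le_eLpNormEssSup
      filter_upwards [hae] with t ht
      have h1 : Λ t ≤ C := by
        refine le_trans (liminf_le_liminf (Filter.Eventually.of_forall fun n => ?_))
          (le_of_eq (liminf_const C))
        refine (ht n).trans ?_
        have := hCbh n
        rwa [hptop, eLpNorm_exponent_top] at this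
      exact lt_of_le_of_lt h1 hC
    · have hr : 0 < p.toReal := ENNReal.toReal_pos hp0 hptop
      have hmono : Monotone (fun x : ℝ≥0∞ => x ^ p.toReal) :=
        fun a b hab => ENNReal.rpow_le_rpow hab hr.le
      have hmeasr : ∀ n, Measurable fun t => (‖h n t‖₊ : ℝ≥0∞) ^ p.toReal := fun n =>
        ENNReal.continuous_rpow_const.measurable.comp (hhsm n).enorm
      have hint : ∫⁻ t, (Λ t) ^ p.toReal ∂μ ≤ C ^ p.toReal := by
        calc ∫⁻ t, (Λ t) ^ p.toReal ∂μ
            = ∫⁻ t, liminf (fun n => (‖h n t‖₊ : ℝ≥0∞) ^ p.toReal) atTop ∂μ := by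
              refine lintegral_congr fun t => ?_
              exact hmono.map_liminf_of_continuousAt (F := atTop)
                (fun n => (‖h n t‖₊ : ℝ≥0∞)) ENNReal.continuous_rpow_const.continuousAt
          _ ≤ liminf (fun n => ∫⁻ t, (‖h n t‖₊ : ℝ≥0∞) ^ p.toReal ∂μ) atTop :=
              lintegral_liminf_le hmeasr
          _ ≤ C ^ p.toReal := by
              refine le_trans (liminf_le_liminf (Filter.Eventually.of_forall fun n => ?_))
                (le_of_eq (liminf_const _))
              have h2 := ENNReal.rpow_le_rpow (hCbh n) hr.le
              rwa [eLpNorm_eq_lintegral_rpow_enorm_toReal hp0 hptop, ← ENNReal.rpow_mul, one_div,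
                inv_mul_cancel₀ hr.ne', ENNReal.rpow_one] at h2
      have hΛmeas : Measurable Λ := Measurable.liminf fun n => (hhsm n).enorm
      have hae := ae_lt_top (ENNReal.continuous_rpow_const.measurable.comp hΛmeas)
        (hint.trans_lt (ENNReal.rpow_lt_top_of_nonneg hr.le hC.ne)).ne
      filter_upwards [hae] with t ht
      by_contra htop
      rw [not_lt, top_le_iff] at htop
      simp only [Function.comp_apply, htop, ENNReal.top_rpow_of_pos hr] at ht
      exact absurd ht (by simp)
  -- the closed separable convex set K
  set Ksub : Submodule ℝ X :=
    (Submodule.span ℝ (⋃ n, Set.range (h n))).topologicalClosure with hKsubdef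
  set Kset : Set X := (Ksub : Set X) with hKsetdef
  have hKclosed : IsClosed Kset := Submodule.isClosed_topologicalClosure _
  have hKconv : Convex ℝ Kset := Ksub.convex
  have hKsep : TopologicalSpace.IsSeparable Kset := by
    have h1 : TopologicalSpace.IsSeparable (⋃ n, Set.range (h n)) :=
      TopologicalSpace.IsSeparable.iUnion fun n => (hhsm n).isSeparable_range
    have h2 := (h1.span (R := ℝ)).closure
    simpa [hKsetdef, hKsubdef, Submodule.topologicalClosure_coe] using h2
  have hKmem : ∀ n t, h n t ∈ Kset := fun n t =>
    Submodule.le_topologicalClosure _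
      (Submodule.subset_span (Set.mem_iUnion.2 ⟨n, Set.mem_range_self t⟩))
  have h0mem : (0 : X) ∈ Kset := Ksub.zero_mem
  -- good set S
  have hQ : ∀ᵐ t ∂μ, (∀ n, fn n t = h n t) ∧
      (∀ φ : Y →L[ℝ] ℝ, Tendsto (fun n => φ (ι (fn n t))) atTop (𝓝 (φ (f t)))) ∧ Λ t < ∞ := by
    filter_upwards [ae_all_iff.2 hfn_eq, hweak, hΛfin] with t h1 h2 h3
    exact ⟨h1, h2, h3⟩
  obtain ⟨T, hTsub, hTmeas, hT0⟩ :=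
    exists_measurable_superset_of_null (MeasureTheory.ae_iff.1 hQ)
  set S : Set ℝ := Tᶜ with hSdef
  have hSmeas : MeasurableSet S := hTmeas.compl
  have hSae : ∀ᵐ t ∂μ, t ∈ S := by
    rw [MeasureTheory.ae_iff]
    have : {t | ¬ t ∈ S} = T := by ext t; simp [hSdef]
    rw [this]; exact hT0
  have hSQ : ∀ t ∈ S, (∀ n, fn n t = h n t) ∧
      (∀ φ : Y →L[ℝ] ℝ, Tendsto (fun n => φ (ι (fn n t))) atTop (𝓝 (φ (f t)))) ∧ Λ t < ∞ := by
    intro t ht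
    by_contra hc
    exact ht (hTsub hc)
  -- pointwise existence of the weak limit in X
  have hex : ∀ t ∈ S, ∃ z : X, z ∈ Kset ∧ ι z = f t ∧ (‖z‖₊ : ℝ≥0∞) ≤ Λ t := by
    intro t ht
    obtain ⟨hQ1, hQ2, hQ3⟩ := hSQ t ht
    have key : ∀ ε : ℝ≥0∞, 0 < ε → ε ≠ ∞ →
        ∃ z : X, z ∈ Kset ∧ ι z = f t ∧ (‖z‖₊ : ℝ≥0∞) ≤ Λ t + ε := by
      intro ε hε hεtop
      have hlt : Λ t < Λ t + ε := ENNReal.lt_add_right hQ3.ne hε.ne'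
      have hfreq : ∃ᶠ n in atTop, (‖h n t‖₊ : ℝ≥0∞) < Λ t + ε :=
        frequently_lt_of_liminf_lt (by isBoundedDefault) hlt
      obtain ⟨σ, hσmono, hσ⟩ := extraction_of_frequently_atTop hfreq
      have hfin : Λ t + ε ≠ ∞ := ENNReal.add_ne_top.2 ⟨hQ3.ne, hεtop⟩
      have hM : ∀ k, ‖h (σ k) t‖ ≤ (Λ t + ε).toReal := by
        intro k
        have h1 := ENNReal.toReal_mono hfin (hσ k).le
        simpa using h1
      have hconv : ∀ φ : Y →L[ℝ] ℝ,
          Tendsto (fun k => φ (ι (h (σ k) t))) atTop (𝓝 (φ (f t))) := by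
        intro φ
        refine ((hQ2 φ).comp hσmono.tendsto_atTop).congr fun k => ?_
        simp only [Function.comp_apply, hQ1 (σ k)]
      obtain ⟨z, hz1, hz2, hz3⟩ := exists_weak_cluster hrefl ι hKclosed hKconv
        (fun k => h (σ k) t) (fun k => hKmem _ t) hM hconv
      refine ⟨z, hz1, hz2, ?_⟩
      calc (‖z‖₊ : ℝ≥0∞) = ENNReal.ofReal ‖z‖ := (ofReal_norm z).symm
        _ ≤ ENNReal.ofReal (Λ t + ε).toReal := ENNReal.ofReal_le_ofReal hz3
        _ = Λ t + ε := ENNReal.ofReal_toReal hfin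
    obtain ⟨z, hz1, hz2, _⟩ := key 1 one_pos ENNReal.one_ne_top
    refine ⟨z, hz1, hz2, ?_⟩
    refine ENNReal.le_of_forall_pos_le_add fun ε hε _ => ?_
    obtain ⟨z', hz1', hz2', hz3'⟩ := key ε (by exact_mod_cast hε) ENNReal.coe_ne_top
    have hzz : z' = z := hι (hz2'.trans hz2.symm)
    rwa [← hzz]
  -- instances making the subtype of Kset a Polish Borel space
  haveI : TopologicalSpace.SeparableSpace Kset := hKsep.separableSpace
  haveI : CompleteSpace Kset := hKclosed.completeSpace_coe
  haveI : PolishSpace Kset := inferInstance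
  letI : MeasurableSpace Kset := borel Kset
  haveI : BorelSpace Kset := ⟨rfl⟩
  -- the candidate function
  let G : ℝ → Kset := fun t =>
    if ht : t ∈ S then ⟨(hex t ht).choose, (hex t ht).choose_spec.1⟩ else ⟨0, h0mem⟩
  -- separating family of functionals on ι '' Kset
  obtain ⟨φ, hφ⟩ := exists_separating_family (Y := Y) (hKsep.image ι.continuous)
  let F : Kset → (ℕ → ℝ) := fun x k => φ k (ι (x : X))
  have hFcont : Continuous F :=
    continuous_pi fun k => (φ k).continuous.comp (ι.continuous.comp continuous_subtype_val)
  have hFinj : Function.Injective F := by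
    intro a b hab
    have hab' : ι (a : X) = ι (b : X) :=
      hφ _ ⟨(a : X), a.2, rfl⟩ _ ⟨(b : X), b.2, rfl⟩ fun k => congrFun hab k
    exact Subtype.ext (hι hab')
  have hFemb : MeasurableEmbedding F := hFcont.measurableEmbedding hFinj
  have hFGmeas : Measurable (F ∘ G) := by
    refine measurable_pi_lambda _ fun k => ?_
    have hw : ∀ n, Measurable (fun t => S.indicator (fun s => φ k (ι (h n s))) t) := by
      intro n
      have hsm : StronglyMeasurable fun s => φ k (ι (h n s)) :=
        ((φ k).continuous.comp ι.continuous).comp_stronglyMeasurable (hhsm n)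
      exact hsm.measurable.indicator hSmeas
    refine measurable_of_tendsto_metrizable hw ?_
    rw [tendsto_pi_nhds]
    intro t
    by_cases ht : t ∈ S
    · obtain ⟨hQ1, hQ2, _⟩ := hSQ t ht
      have hGt : ((G t : Kset) : X) = (hex t ht).choose := by
        simp only [G, dif_pos ht]
      have hval : (F ∘ G) t k = φ k (f t) := by
        simp only [Function.comp_apply, F, hGt, (hex t ht).choose_spec.2.1]
      rw [hval]
      refine (hQ2 (φ k)).congr fun n => ?_
      simp only [Set.indicator_of_mem ht, hQ1 n]
    · have hGt : ((G t : Kset) : X) = (0 : X) := by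
        simp only [G, dif_neg ht]
      have hval : (F ∘ G) t k = 0 := by
        simp only [Function.comp_apply, F, hGt, map_zero]
      rw [hval]
      simp only [Set.indicator_of_notMem ht]
      exact tendsto_const_nhds
  have hGmeas : Measurable G := hFemb.measurable_comp_iff.1 hFGmeas
  have hGsm : StronglyMeasurable G := hGmeas.stronglyMeasurable
  set g : ℝ → X := fun t => ((G t : Kset) : X) with hgdef
  have hgsm : StronglyMeasurable g := continuous_subtype_val.comp_stronglyMeasurable hGsm
  have hg_eq : ∀ᵐ t ∂μ, ι (g t) = f t := by
    filter_upwards [hSae] with t ht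
    have hGt : g t = (hex t ht).choose := by simp only [hgdef, G, dif_pos ht]
    rw [hGt]; exact (hex t ht).choose_spec.2.1
  have hg_norm : ∀ᵐ t ∂μ, (‖g t‖₊ : ℝ≥0∞) ≤ Λ t := by
    filter_upwards [hSae] with t ht
    have hGt : g t = (hex t ht).choose := by simp only [hgdef, G, dif_pos ht]
    rw [hGt]; exact (hex t ht).choose_spec.2.2
  have hbound : eLpNorm g p μ ≤ liminf (fun n => eLpNorm (h n) p μ) atTop :=
    eLpNorm_le_liminf_of_ae_liminf hp0 (fun n => (hhsm n).aestronglyMeasurable) hg_norm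
  have hliminf_eq : liminf (fun n => eLpNorm (h n) p μ) atTop =
      liminf (fun n => eLpNorm (fn n) p μ) atTop := by
    congr 1
    funext n
    exact eLpNorm_congr_ae (hfn_eq n).symm
  have hfinal : eLpNorm g p μ ≤ liminf (fun n => eLpNorm (fn n) p μ) atTop :=
    hbound.trans_eq hliminf_eq
  refine ⟨g, hg_eq, ⟨hgsm.aestronglyMeasurable, ?_⟩, hfinal⟩
  refine lt_of_le_of_lt hfinal (lt_of_le_of_lt ?_ hC)
  exact (liminf_le_liminf (Filter.Eventually.of_forall hCb)).trans (le_of_eq (liminf_const C))
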